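/- Let E be an elliptic curve over ℚ admitting a rational point of order 3. Then there exist integers a and b with b > 0 such that for every prime q one has ¬(q ∣ a ∧ q³ ∣ b), and such that E is isomorphic over ℚ (via an admissible change of Weierstrass variables) to the Weierstrass curve y² + a·x·y + b·y = x³; in particular the discriminant b³·(a³ − 27b) of this equation is nonzero. -/

import Mathlib

open WeierstrassCurve

/-- Auxiliary number-theoretic lemma: any pair of rationals `(a₀, b₀)` with `b₀ ≠ 0` can be
rescaled by `v` to an integral pair `(a, b)` with `b > 0` and no prime `q` with
`q ∣ a` and `q ^ 3 ∣ b`. -/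
lemma exists_min_rescale (a₀ b₀ : ℚ) (hb₀ : b₀ ≠ 0) :
    ∃ (a b : ℤ) (v : ℚ), 0 < b ∧ v ≠ 0 ∧ (a : ℚ) = a₀ * v⁻¹ ∧ (b : ℚ) = b₀ * v⁻¹ ^ 3 ∧
      ∀ q : ℕ, q.Prime → ¬((q : ℤ) ∣ a ∧ (q : ℤ) ^ 3 ∣ b) := by
  classical
  set Q : ℕ → Prop := fun n =>
    0 < n ∧ ∃ (a : ℤ) (v : ℚ), v ≠ 0 ∧ (a : ℚ) = a₀ * v⁻¹ ∧ (n : ℚ) = b₀ * v⁻¹ ^ 3 with hQ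
  have hden : ∀ q : ℚ, (q.den : ℚ) ≠ 0 := fun q => Nat.cast_ne_zero.mpr q.den_nz
  set d : ℚ := (a₀.den : ℚ) * (b₀.den : ℚ) with hd
  have hd0 : d ≠ 0 := mul_ne_zero (hden a₀) (hden b₀)
  have hnum : ∀ q : ℚ, q * (q.den : ℚ) = (q.num : ℚ) := fun q => by
    nth_rewrite 1 [← Rat.num_div_den q]
    rw [div_mul_cancel₀ _ (hden q)]
  have hk : ((a₀.num * (b₀.den : ℤ) : ℤ) : ℚ) = a₀ * d := by
    push_cast
    rw [hd]
    linear_combination (-(b₀.den : ℚ)) * hnum a₀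
  have hm : ((b₀.num * ((a₀.den : ℤ) ^ 3 * (b₀.den : ℤ) ^ 2) : ℤ) : ℚ) = b₀ * d ^ 3 := by
    push_cast
    rw [hd]
    linear_combination (-((a₀.den : ℚ) ^ 3 * (b₀.den : ℚ) ^ 2)) * hnum b₀
  set m : ℤ := b₀.num * ((a₀.den : ℤ) ^ 3 * (b₀.den : ℤ) ^ 2) with hmdef
  have hm0 : (m : ℚ) ≠ 0 := by
    rw [hm]; exact mul_ne_zero hb₀ (pow_ne_zero 3 hd0)
  have hmZ0 : m ≠ 0 := fun h => hm0 (by rw [h]; exact Int.cast_zero)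
  have hex : ∃ n, Q n := by
    rcases lt_or_gt_of_ne hmZ0 with hneg | hpos
    · refine ⟨(-m).toNat, ?_, -(a₀.num * b₀.den), -d⁻¹, ?_, ?_, ?_⟩
      · omega
      · exact neg_ne_zero.mpr (inv_ne_zero hd0)
      · rw [Int.cast_neg, hk, inv_neg, inv_inv]; ring
      · have h1 : (((-m).toNat : ℕ) : ℚ) = -(m : ℚ) := by
          rw [show (((-m).toNat : ℕ) : ℚ) = (((-m).toNat : ℤ) : ℚ) from by push_cast; ring,
            Int.toNat_of_nonneg (by omega), Int.cast_neg]
        rw [h1, hm, inv_neg, inv_inv]; ring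
    · refine ⟨m.toNat, ?_, a₀.num * b₀.den, d⁻¹, inv_ne_zero hd0, ?_, ?_⟩
      · omega
      · rw [inv_inv, hk]
      · rw [show ((m.toNat : ℕ) : ℚ) = ((m.toNat : ℤ) : ℚ) from by push_cast; ring,
          Int.toNat_of_nonneg (by omega), hm, inv_inv]
  set n := Nat.find hex with hn
  obtain ⟨hnpos, a, v, hv, ha, hb⟩ := Nat.find_spec hex
  rw [← hn] at hnpos hb
  refine ⟨a, (n : ℤ), v, by exact_mod_cast hnpos, hv, ha, by exact_mod_cast hb, ?_⟩
  rintro q hq ⟨hqa, hqb⟩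
  have hq0 : (q : ℚ) ≠ 0 := Nat.cast_ne_zero.mpr hq.ne_zero
  obtain ⟨c, hc⟩ := hqa
  have hqb' : q ^ 3 ∣ n := by
    have h2 : ((q ^ 3 : ℕ) : ℤ) ∣ (n : ℤ) := by push_cast; exact hqb
    exact_mod_cast h2
  obtain ⟨n', hn'⟩ := hqb'
  have hn'pos : 0 < n' := by
    have h2 : 0 < q ^ 3 * n' := hn' ▸ hnpos
    exact Nat.pos_of_ne_zero fun h0 => by rw [h0, Nat.mul_zero] at h2; exact Nat.lt_irrefl 0 h2
  have hQn' : Q n' := by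
    refine ⟨hn'pos, c, v * q, mul_ne_zero hv hq0, ?_, ?_⟩
    · have hcq : (c : ℚ) = (a : ℚ) / q := by
        rw [hc]; push_cast; rw [mul_comm, mul_div_assoc, div_self hq0, mul_one]
      rw [hcq, ha, mul_inv, div_eq_mul_inv]; ring
    · have hnq : ((q : ℚ)) ^ 3 * (n' : ℚ) = b₀ * v⁻¹ ^ 3 := by
        rw [← hb, hn']; push_cast; ring
      have h3 : (n' : ℚ) = b₀ * v⁻¹ ^ 3 / q ^ 3 := by
        rw [← hnq, mul_comm, mul_div_assoc, div_self (pow_ne_zero 3 hq0), mul_one]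
      rw [h3, mul_inv, mul_pow, div_eq_mul_inv, ← inv_pow]; ring
  have hlt : n' < n := by
    have h8 : 2 ≤ q := hq.two_le
    have h9 : 1 < q ^ 3 := by
      calc 1 < 2 ^ 3 := by norm_num
      _ ≤ q ^ 3 := Nat.pow_le_pow_left h8 3
    calc n' = 1 * n' := (one_mul n').symm
    _ < q ^ 3 * n' := (Nat.mul_lt_mul_right hn'pos).mpr h9
    _ = n := hn'.symm
  exact Nat.find_min hex hlt hQn'

theorem exists_normal_form_of_three_torsion (E : WeierstrassCurve ℚ) [E.IsElliptic]
    (hP : ∃ P : E.toAffine.Point, addOrderOf P = 3) :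
    ∃ a b : ℤ, 0 < b ∧
      (∀ q : ℕ, q.Prime → ¬((q : ℤ) ∣ a ∧ (q : ℤ) ^ 3 ∣ b)) ∧
      (∃ C : WeierstrassCurve.VariableChange ℚ,
        (C • E : WeierstrassCurve ℚ) = ⟨(a : ℚ), 0, (b : ℚ), 0, 0⟩) ∧
      (b : ℚ) ^ 3 * ((a : ℚ) ^ 3 - 27 * (b : ℚ)) ≠ 0 := by
  obtain ⟨P, hord⟩ := hP
  induction P using WeierstrassCurve.Affine.Point.rec with
  | zero =>
      rw [← Affine.Point.zero_def, addOrderOf_zero] at hord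
      exact absurd hord (by norm_num)
  | @some x₀ y₀ h =>
  -- P is not 2-torsion
  have hy : y₀ ≠ E.toAffine.negY x₀ y₀ := by
    intro hyy
    have h2 : (2 : ℕ) • Affine.Point.some _ _ h = 0 := by
      rw [two_nsmul]; exact Affine.Point.add_self_of_Y_eq hyy
    have := addOrderOf_dvd_of_nsmul_eq_zero h2
    rw [hord] at this
    norm_num at this
  -- 2P = -P
  have h3 : Affine.Point.some _ _ h + Affine.Point.some _ _ h + Affine.Point.some _ _ h = 0 := by
    have h3' := addOrderOf_nsmul_eq_zero (Affine.Point.some _ _ h)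
    rw [hord, succ_nsmul, two_nsmul] at h3'
    exact h3'
  have hPP : Affine.Point.some _ _ h + Affine.Point.some _ _ h = -Affine.Point.some _ _ h :=
    add_eq_zero_iff_eq_neg.mp h3
  rw [Affine.Point.add_self_of_Y_ne hy, Affine.Point.neg_some] at hPP
  injection hPP with hx hy'
  set ℓ : ℚ := E.toAffine.slope x₀ x₀ y₀ y₀ with hℓ
  simp only [Affine.addX] at hx
  have hdenne : 2 * y₀ + E.a₁ * x₀ + E.a₃ ≠ 0 := by
    intro hcon
    apply hy
    simp only [Affine.negY]
    linarith
  have hslope : ℓ = (3 * x₀ ^ 2 + 2 * E.a₂ * x₀ + E.a₄ - E.a₁ * y₀) /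
      (2 * y₀ + E.a₁ * x₀ + E.a₃) := by
    rw [hℓ, Affine.slope_of_Y_ne rfl hy]
    simp only [Affine.negY]
    congr 1
    ring
  have hmul : ℓ * (2 * y₀ + E.a₁ * x₀ + E.a₃) =
      3 * x₀ ^ 2 + 2 * E.a₂ * x₀ + E.a₄ - E.a₁ * y₀ := by
    rw [hslope, div_mul_cancel₀ _ hdenne]
  have heq : y₀ ^ 2 + E.a₁ * x₀ * y₀ + E.a₃ * y₀ =
      x₀ ^ 3 + E.a₂ * x₀ ^ 2 + E.a₄ * x₀ + E.a₆ :=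
    (E.toAffine.equation_iff x₀ y₀).mp h.1
  set a₀ : ℚ := E.a₁ + 2 * ℓ with ha₀
  set b₀ : ℚ := E.a₃ + x₀ * E.a₁ + 2 * y₀ with hb₀def
  have hb₀ : b₀ ≠ 0 := by rw [hb₀def]; intro hcon; exact hdenne (by linarith)
  have hE' : (⟨1, x₀, ℓ, y₀⟩ : VariableChange ℚ) • E = ⟨a₀, 0, b₀, 0, 0⟩ := by
    ext <;> simp only [variableChange_a₁, variableChange_a₂, variableChange_a₃,
        variableChange_a₄, variableChange_a₆, inv_one, Units.val_one, one_pow, one_mul] <;>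
      first
        | ring1
        | linear_combination -hx
        | linear_combination -hmul
        | linear_combination -heq
  obtain ⟨a, b, v, hbpos, hv, ha, hb, hmin⟩ := exists_min_rescale a₀ b₀ hb₀
  have hvinv : (((Units.mk0 v hv)⁻¹ : ℚˣ) : ℚ) = (v⁻¹ : ℚ) := by
    rw [Units.val_inv_eq_inv_val, Units.val_mk0]
  have hC : ((⟨Units.mk0 v hv, 0, 0, 0⟩ : VariableChange ℚ) *
      ⟨1, x₀, ℓ, y₀⟩) • E = ⟨(a : ℚ), 0, (b : ℚ), 0, 0⟩ := by
    rw [mul_smul, hE']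
    ext <;> simp only [variableChange_a₁, variableChange_a₂, variableChange_a₃,
        variableChange_a₄, variableChange_a₆, hvinv] <;>
      first
        | ring1
        | linear_combination -ha
        | linear_combination -hb
  refine ⟨a, b, hbpos, hmin, ⟨_, hC⟩, ?_⟩
  have hΔ : (((⟨Units.mk0 v hv, 0, 0, 0⟩ : VariableChange ℚ) *
      ⟨1, x₀, ℓ, y₀⟩) • E).Δ ≠ 0 := by
    rw [variableChange_Δ]
    exact mul_ne_zero (pow_ne_zero _ (Units.ne_zero _)) E.isUnit_Δ.ne_zero
  rw [hC] at hΔ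
  have hDval : (⟨(a : ℚ), 0, (b : ℚ), 0, 0⟩ : WeierstrassCurve ℚ).Δ =
      (b : ℚ) ^ 3 * ((a : ℚ) ^ 3 - 27 * (b : ℚ)) := by
    simp only [WeierstrassCurve.Δ, WeierstrassCurve.b₂, WeierstrassCurve.b₄,
      WeierstrassCurve.b₆, WeierstrassCurve.b₈]
    ring
  rwa [hDval] at hΔ
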